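/- arXiv:1010.5673 — 2 statements merged into one kernel-verified Lean document; each statement's English description precedes it below -/
import Mathlib

section
/- Let G(x,y) = Σ_{n,k ≥ 0} g_{n,k} y^k x^n where g_{n,k} is the number of Dyck paths of semilength n with exactly k up steps at height h ≡ 0 (mod 3). Then G satisfies the algebraic equation x·y·(1-x)·G² - (1 - 2x + x·y)·G + (1-x) = 0 (as an identity of formal power series). -/
/-- A Dyck path of semilength `n`, encoded as a list of booleans where
`true` is an up step `(1,1)` and `false` is a down step `(1,-1)`;
the path never goes below the x-axis. -/
def IsDyckPath (n : ℕ) (p : List Bool) : Prop :=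
  p.length = 2 * n ∧ p.count true = n ∧
  ∀ i, (p.take i).count false ≤ (p.take i).count true

/-- The height of the `i`-th step: the y-coordinate reached after step `i`.
For an up step this is the height `h` such that the step rises from `y = h-1` to `y = h`. -/
def stepHeight (p : List Bool) (i : ℕ) : ℕ :=
  (p.take (i + 1)).count true - (p.take (i + 1)).count false

/-- The number of up steps of `p` at height `h` with `h ≡ c (mod m)`. -/
def upStepsMod (m c : ℕ) (p : List Bool) : ℕ :=
  ((Finset.range p.length).filter
    (fun i => p.getD i false = true ∧ stepHeight p i % m = c)).card


open MvPowerSeries in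
/-- `G(x,y) = Σ g_{n,k} y^k x^n` where `g_{n,k}` is the number of Dyck paths of
semilength `n` with exactly `k` up steps at height `h ≡ 0 (mod 3)`;
`X 0` plays the role of `x` and `X 1` plays the role of `y`. -/
noncomputable def G : MvPowerSeries (Fin 2) ℚ :=
  fun d => (Nat.card {p : List Bool // IsDyckPath (d 0) p ∧ upStepsMod 3 0 p = d 1} : ℚ)

namespace DyckAux

lemma count_single_take_true (i : ℕ) : (([true] : List Bool).take i).count true = if i = 0 then 0 else 1 := by
  cases i <;> simp

lemma count_single_take_tf (i : ℕ) : (([true] : List Bool).take i).count false = 0 := by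
  cases i <;> simp

lemma count_single_take_false (i : ℕ) : (([false] : List Bool).take i).count false = if i = 0 then 0 else 1 := by
  cases i <;> simp

lemma count_single_take_ft (i : ℕ) : (([false] : List Bool).take i).count true = 0 := by
  cases i <;> simp

lemma comp_eq (q r : List Bool) : true :: q ++ false :: r = [true] ++ (q ++ ([false] ++ r)) := by simp

lemma ct_take (q r : List Bool) (i : ℕ) :
    ((true :: q ++ false :: r).take i).count true
      = (if i = 0 then 0 else 1) + (q.take (i-1)).count true
        + ((r.take (i - (q.length+2))).count true) := by
  rw [comp_eq, List.take_append, List.take_append,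
    List.take_append, List.count_append, List.count_append, List.count_append]
  rw [count_single_take_true, count_single_take_ft]
  simp only [List.length_singleton]
  have h1 : i - 1 - q.length - 1 = i - (q.length + 2) := by omega
  rw [h1]
  ring

lemma cf_take (q r : List Bool) (i : ℕ) :
    ((true :: q ++ false :: r).take i).count false
      = (q.take (i-1)).count false + (if i ≤ q.length + 1 then 0 else 1)
        + ((r.take (i - (q.length+2))).count false) := by
  rw [comp_eq, List.take_append, List.take_append,
    List.take_append, List.count_append, List.count_append, List.count_append]
  rw [count_single_take_tf, count_single_take_false]
  simp only [List.length_singleton]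
  have h1 : i - 1 - q.length - 1 = i - (q.length + 2) := by omega
  have h2 : (if i - 1 - q.length = 0 then (0:ℕ) else 1) = (if i ≤ q.length + 1 then 0 else 1) := by
    split_ifs <;> omega
  rw [h1, h2]
  ring

end DyckAux

namespace DyckAux

variable {a b : ℕ} {q r : List Bool}

lemma isDyckPath_comp (hq : IsDyckPath a q) (hr : IsDyckPath b r) :
    IsDyckPath (a + b + 1) (true :: q ++ false :: r) := by
  obtain ⟨hql, hqt, hqp⟩ := hq
  obtain ⟨hrl, hrt, hrp⟩ := hr
  refine ⟨by simp only [List.length_append, List.length_cons, hql, hrl]; omega, ?_, ?_⟩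
  · have hqf : q.count false = a := by
      have := q.count_true_add_count_false; omega
    simp only [List.count_append, List.count_cons, hqt, hrt, beq_self_eq_true, if_true]
    simp
    omega
  · intro i
    rw [ct_take, cf_take]
    have h1 := hqp (i-1)
    have h2 := hrp (i - (q.length + 2))
    split_ifs <;> omega

lemma getD_comp_zero : (true :: q ++ false :: r).getD 0 false = true := rfl

lemma stepHeight_comp_zero : stepHeight (true :: q ++ false :: r) 0 = 1 := by
  unfold stepHeight
  rw [ct_take, cf_take]
  simp

lemma getD_comp_mid (j : ℕ) (hj : j < q.length) :
    (true :: q ++ false :: r).getD (j+1) false = q.getD j false := by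
  show (q ++ false :: r).getD j false = q.getD j false
  exact List.getD_append _ _ _ _ hj

lemma stepHeight_comp_mid (hq : IsDyckPath a q) (j : ℕ) (hj : j < q.length) :
    stepHeight (true :: q ++ false :: r) (j+1) = stepHeight q j + 1 := by
  unfold stepHeight
  rw [ct_take, cf_take]
  have h0 : j + 1 + 1 - 1 = j + 1 := by omega
  have h1 : j + 1 + 1 - (q.length + 2) = 0 := by omega
  have h2 : ¬ (j + 1 + 1 = 0) := by omega
  have h3 : j + 1 + 1 ≤ q.length + 1 := by omega
  rw [h0, h1, if_neg h2, if_pos h3]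
  have := hq.2.2 (j+1)
  simp only [List.take_zero, List.count_nil]
  omega

lemma getD_comp_ret : (true :: q ++ false :: r).getD (q.length + 1) false = false := by
  show (q ++ false :: r).getD q.length false = false
  rw [List.getD_append_right _ _ _ _ le_rfl]
  simp

lemma getD_comp_right (j : ℕ) :
    (true :: q ++ false :: r).getD (q.length + 2 + j) false = r.getD j false := by
  have he : q.length + 2 + j = (q.length + 1 + j) + 1 := by omega
  rw [he]
  show (q ++ false :: r).getD (q.length + 1 + j) false = r.getD j false
  rw [List.getD_append_right _ _ _ _ (by omega)]
  have : q.length + 1 + j - q.length = j + 1 := by omega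
  rw [this]
  rfl

lemma stepHeight_comp_right (hq : IsDyckPath a q) (hr : IsDyckPath b r) (j : ℕ) :
    stepHeight (true :: q ++ false :: r) (q.length + 2 + j) = stepHeight r j := by
  unfold stepHeight
  rw [ct_take, cf_take]
  have hqf : q.count false = a := by
    have := q.count_true_add_count_false; have := hq.1; have := hq.2.1; omega
  have h0 : q.length + 2 + j + 1 - 1 = q.length + (j + 2) := by omega
  have h1 : q.length + 2 + j + 1 - (q.length + 2) = j + 1 := by omega
  rw [h0, h1, List.take_add, List.take_length, if_neg (by omega), if_neg (by omega)]
  simp only [List.count_append]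
  have := hr.2.2 (j+1)
  have h4 : ((q.drop q.length).take (j+2)).count true = 0 := by simp
  have h5 : ((q.drop q.length).take (j+2)).count false = 0 := by simp
  rw [h4, h5, hq.2.1, hqf]
  omega

end DyckAux
namespace DyckAux
open Finset

variable {a b : ℕ} {q r : List Bool}

lemma mod3_shift {h c : ℕ} (hc : c < 3) : (h + 1) % 3 = c ↔ h % 3 = (c + 2) % 3 := by
  omega

lemma upStepsMod_comp (hq : IsDyckPath a q) (hr : IsDyckPath b r) (c : ℕ) (hc : c < 3) :
    upStepsMod 3 c (true :: q ++ false :: r)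
      = (if c = 1 then 1 else 0) + upStepsMod 3 ((c+2)%3) q + upStepsMod 3 c r := by

  set p := true :: q ++ false :: r with hp
  have hA : q.length = 2*a := hq.1
  have hB : r.length = 2*b := hr.1
  have hN : p.length = 2*a + 2*b + 2 := by
    simp only [hp, List.length_append, List.length_cons, hA, hB]; omega
  unfold upStepsMod
  rw [hN, hA, hB]
  set P : ℕ → Prop := fun i => p.getD i false = true ∧ stepHeight p i % 3 = c with hP
  have hdis1 : Disjoint (filter P {0})
      ((filter P (Ico 1 (2*a+1))) ∪ ((filter P {2*a+1}) ∪ (filter P (Ico (2*a+2) (2*a+2*b+2))))) := by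
    rw [Finset.disjoint_left]; intro x hx hy
    simp only [Finset.mem_union, Finset.mem_filter, Finset.mem_singleton, Finset.mem_Ico] at hx hy
    omega
  have hdis2 : Disjoint (filter P (Ico 1 (2*a+1)))
      ((filter P {2*a+1}) ∪ (filter P (Ico (2*a+2) (2*a+2*b+2)))) := by
    rw [Finset.disjoint_left]; intro x hx hy
    simp only [Finset.mem_union, Finset.mem_filter, Finset.mem_singleton, Finset.mem_Ico] at hx hy
    omega
  have hdis3 : Disjoint (filter P {2*a+1}) (filter P (Ico (2*a+2) (2*a+2*b+2))) := by
    rw [Finset.disjoint_left]; intro x hx hy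
    simp only [Finset.mem_filter, Finset.mem_singleton, Finset.mem_Ico] at hx hy
    omega
  have hsplit : range (2*a + 2*b + 2)
      = {0} ∪ ((Ico 1 (2*a+1)) ∪ ({2*a+1} ∪ (Ico (2*a+2) (2*a+2*b+2)))) := by
    ext i
    simp only [Finset.mem_range, Finset.mem_union, Finset.mem_singleton, Finset.mem_Ico]
    omega
  rw [hsplit, filter_union, filter_union, filter_union,
    card_union_of_disjoint hdis1, card_union_of_disjoint hdis2,
    card_union_of_disjoint hdis3]
  have c0 : (filter P {0}).card = if c = 1 then 1 else 0 := by
    have hiff : P 0 ↔ c = 1 := by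
      simp only [hP, hp, getD_comp_zero, stepHeight_comp_zero, true_and]
      constructor <;> omega
    by_cases h : c = 1
    · rw [if_pos h, filter_singleton, if_pos (hiff.mpr h)]; rfl
    · rw [if_neg h, filter_singleton, if_neg (fun hx => h (hiff.mp hx))]; rfl
  have c1 : (filter P (Ico 1 (2*a+1))).card
      = (filter (fun i => q.getD i false = true ∧ stepHeight q i % 3 = (c+2)%3) (range (2*a))).card := by
    apply Finset.card_nbij' (fun i => i - 1) (fun j => j + 1)
    · intro i hi
      simp only [mem_coe, mem_filter, Finset.mem_Ico, hP] at hi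
      obtain ⟨⟨hi1, hi2⟩, hgd, hsh⟩ := hi
      obtain ⟨j, rfl⟩ : ∃ j, i = j + 1 := ⟨i - 1, by omega⟩
      have hj : j < q.length := by omega
      have hidx : j + 1 - 1 = j := by omega
      simp only [mem_coe, mem_filter, Finset.mem_range, hidx]
      refine ⟨by omega, ?_, ?_⟩
      · rwa [hp, getD_comp_mid j hj] at hgd
      · rw [hp, stepHeight_comp_mid hq j hj] at hsh
        exact (mod3_shift hc).mp hsh
    · intro j hj
      simp only [mem_coe, mem_filter, Finset.mem_range] at hj
      obtain ⟨hj1, hgd, hsh⟩ := hj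
      have hjq : j < q.length := by omega
      simp only [mem_coe, mem_filter, Finset.mem_Ico, hP, hp]
      rw [getD_comp_mid j hjq, stepHeight_comp_mid hq j hjq]
      exact ⟨by omega, hgd, (mod3_shift hc).mpr hsh⟩
    · intro i hi
      simp only [mem_coe, mem_filter, Finset.mem_Ico] at hi
      beta_reduce
      omega
    · intro j _
      beta_reduce
      omega
  have c2 : (filter P {2*a+1}).card = 0 := by
    rw [Finset.card_eq_zero, filter_singleton, if_neg]
    intro hx
    have h2 := hx.1
    rw [hp, show 2*a+1 = q.length + 1 by omega, getD_comp_ret] at h2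
    simp at h2
  have c3 : (filter P (Ico (2*a+2) (2*a+2*b+2))).card
      = (filter (fun i => r.getD i false = true ∧ stepHeight r i % 3 = c) (range (2*b))).card := by
    apply Finset.card_nbij' (fun i => i - (2*a+2)) (fun j => j + (2*a+2))
    · intro i hi
      simp only [mem_coe, mem_filter, Finset.mem_Ico, hP] at hi
      obtain ⟨⟨hi1, hi2⟩, hgd, hsh⟩ := hi
      obtain ⟨j, rfl⟩ : ∃ j, i = q.length + 2 + j := ⟨i - (2*a+2), by omega⟩
      have hidx : q.length + 2 + j - (2*a+2) = j := by omega
      simp only [mem_coe, mem_filter, Finset.mem_range, hidx]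
      rw [hp, getD_comp_right j] at hgd
      rw [hp, stepHeight_comp_right hq hr j] at hsh
      exact ⟨by omega, hgd, hsh⟩
    · intro j hj
      simp only [mem_coe, mem_filter, Finset.mem_range] at hj
      obtain ⟨hj1, hgd, hsh⟩ := hj
      simp only [mem_coe, mem_filter, Finset.mem_Ico, hP, hp]
      rw [show j + (2*a+2) = q.length + 2 + j by omega, getD_comp_right j,
        stepHeight_comp_right hq hr j]
      exact ⟨by omega, hgd, hsh⟩
    · intro i hi
      simp only [mem_coe, mem_filter, Finset.mem_Ico] at hi
      beta_reduce
      omega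
    · intro j _
      beta_reduce
      omega
  rw [c0, c1, c2, c3]
  omega

end DyckAux
namespace DyckAux

lemma counts_take_cons (x : Bool) (t : List Bool) (i : ℕ) (b : Bool) :
    ((x :: t).take (i+1)).count b = (if x = b then 1 else 0) + (t.take i).count b := by
  simp [List.take_succ_cons, List.count_cons]
  cases x <;> cases b <;> simp <;> omega

lemma head_true_of_dyck {n : ℕ} {p : List Bool} (h : IsDyckPath (n+1) p) :
    ∃ t, p = true :: t := by
  have hlen : p.length = 2*(n+1) := h.1
  have hne : p ≠ [] := by intro he; rw [he] at hlen; simp at hlen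
  obtain ⟨x, t, rfl⟩ : ∃ x t, p = x :: t := ⟨p.head hne, p.tail, (List.cons_head_tail hne).symm⟩
  cases x with
  | true => exact ⟨t, rfl⟩
  | false =>
    have := h.2.2 1
    simp at this
lemma exists_decomp {n : ℕ} {p : List Bool} (h : IsDyckPath (n+1) p) :
    ∃ a b q r, a + b = n ∧ IsDyckPath a q ∧ IsDyckPath b r ∧ p = true :: q ++ false :: r := by
  obtain ⟨t, rfl⟩ := head_true_of_dyck h
  obtain ⟨hlen, hct, hpre⟩ := h
  have htlen : t.length = 2*n + 1 := by simp at hlen; omega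
  have htct : t.count true = n := by simp at hct; omega
  have htcf : t.count false = n + 1 := by
    have := t.count_true_add_count_false; omega
  -- prefix bound for t
  have htpre : ∀ i, (t.take i).count false ≤ (t.take i).count true + 1 := by
    intro i
    have := hpre (i+1)
    rw [counts_take_cons, counts_take_cons] at this
    simp at this
    omega
  -- find first violation
  have hQex : ∃ m, (t.take (m+1)).count false = (t.take (m+1)).count true + 1 := by
    refine ⟨2*n, ?_⟩
    rw [List.take_of_length_le (by omega), htct, htcf]
  set m := Nat.find hQex with hm
  have hQm : (t.take (m+1)).count false = (t.take (m+1)).count true + 1 := Nat.find_spec hQex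
  have hmin : ∀ i < m, ¬ ((t.take (i+1)).count false = (t.take (i+1)).count true + 1) :=
    fun i hi => Nat.find_min hQex hi
  have hmle : m ≤ 2*n := Nat.find_le (by
    rw [List.take_of_length_le (by omega), htct, htcf])
  have hmlt : m < t.length := by omega
  -- prefix counts of t up to m are balanced or better
  have hbal : ∀ i, i ≤ m → (t.take i).count false ≤ (t.take i).count true := by
    intro i hi
    cases i with
    | zero => simp
    | succ i' =>
      have h1 := htpre (i'+1)
      have h2 := hmin i' (by omega)
      omega
  -- t[m] = false
  have htm : t.getD m false = false := by
    by_contra hc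
    have hc' : t.getD m false = true := by
      cases hv : t.getD m false
      · exact absurd hv hc
      · rfl
    have hsp : t.take (m+1) = t.take m ++ [t.getD m false] := by
      rw [List.getD_eq_getElem t false hmlt]
      exact (List.take_concat_get' t m hmlt).symm
    rw [hsp, hc'] at hQm
    simp [List.count_append] at hQm
    have := hbal m le_rfl
    omega
  refine ⟨(t.take m).count true, n - (t.take m).count true, t.take m, t.drop (m+1), ?_, ?_, ?_, ?_⟩
  · -- a + b = n
    have h1 : (t.take m).count true ≤ n := by
      rw [← htct]
      exact (List.take_sublist m t).count_le true
    omega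
  · -- q Dyck
    have hqbal : (t.take m).count false = (t.take m).count true := by
      have hsp : t.take (m+1) = t.take m ++ [t.getD m false] := by
        rw [List.getD_eq_getElem t false hmlt]
        exact (List.take_concat_get' t m hmlt).symm
      rw [hsp, htm] at hQm
      simp [List.count_append] at hQm
      omega
    refine ⟨?_, rfl, ?_⟩
    · have : (t.take m).length = m := by rw [List.length_take]; omega
      have := (t.take m).count_true_add_count_false
      omega
    · intro i
      rw [List.take_take]
      rcases le_or_gt i m with hile | hile
      · rw [min_eq_left hile]
        exact hbal i hile
      · rw [min_eq_right (by omega)]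
        omega
  · -- r Dyck
    have hqbal : (t.take m).count false = (t.take m).count true := by
      have hsp : t.take (m+1) = t.take m ++ [t.getD m false] := by
        rw [List.getD_eq_getElem t false hmlt]
        exact (List.take_concat_get' t m hmlt).symm
      rw [hsp, htm] at hQm
      simp [List.count_append] at hQm
      omega
    have hdt : t = t.take (m+1) ++ t.drop (m+1) := (List.take_append_drop _ _).symm
    have hcta : t.count true = (t.take (m+1)).count true + (t.drop (m+1)).count true := by
      conv_lhs => rw [hdt]
      rw [List.count_append]
    have hcfa : t.count false = (t.take (m+1)).count false + (t.drop (m+1)).count false := by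
      conv_lhs => rw [hdt]
      rw [List.count_append]
    have hta : (t.take (m+1)).count true = (t.take m).count true := by
      have hsp : t.take (m+1) = t.take m ++ [t.getD m false] := by
        rw [List.getD_eq_getElem t false hmlt]
        exact (List.take_concat_get' t m hmlt).symm
      rw [hsp, htm]; simp [List.count_append]
    set a := (t.take m).count true with ha
    have hdl : (t.drop (m+1)).length = t.length - (m+1) := List.length_drop
    have hdct : (t.drop (m+1)).count true = n - a := by omega
    have hdcf : (t.drop (m+1)).count false = n - a := by
      have := (t.drop (m+1)).count_true_add_count_false
      have hmm : m = 2*a := by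
        have : (t.take m).length = m := by rw [List.length_take]; omega
        have := (t.take m).count_true_add_count_false
        omega
      omega
    refine ⟨?_, hdct, ?_⟩
    · have hmm : m = 2*a := by
        have : (t.take m).length = m := by rw [List.length_take]; omega
        have := (t.take m).count_true_add_count_false
        omega
      have han : a ≤ n := by omega
      omega
    · intro i
      have h1 := htpre (m+1+i)
      have htake : t.take (m+1+i) = t.take (m+1) ++ (t.drop (m+1)).take i := by
        rw [List.take_add]
      rw [htake, List.count_append, List.count_append] at h1
      omega
  · -- decomposition
    have : t = t.take m ++ false :: t.drop (m+1) := by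
      conv_lhs => rw [← List.take_append_drop m t]
      congr 1
      rw [List.drop_eq_getElem_cons hmlt]
      congr 1
      rw [← List.getD_eq_getElem t false hmlt, htm]
    exact congrArg (List.cons true) this

lemma decomp_uniq_aux {a a' : ℕ} {q q' r r' : List Bool}
    (hq : IsDyckPath a q) (hq' : IsDyckPath a' q')
    (hle : q.length ≤ q'.length)
    (h : q ++ false :: r = q' ++ false :: r') : q = q' := by
  have hqcf : q.count false = q.count true := by
    have h1 := hq.1; have h2 := hq.2.1
    have := q.count_true_add_count_false; omega
  have htake : q = q'.take q.length := by
    have h1 : (q ++ false :: r).take q.length = q := by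
      rw [List.take_append]
      simp
    have h2 : (q' ++ false :: r').take q.length = q'.take q.length := by
      rw [List.take_append]
      have : q.length - q'.length = 0 := by omega
      rw [this]
      simp
    conv_lhs => rw [← h1]
    rw [h]
    exact h2
  rcases lt_or_eq_of_le hle with hlt | heq
  · exfalso
    have hgd : q'.getD q.length false = false := by
      have h1 : (q ++ false :: r).getD q.length false = false := by
        rw [List.getD_append_right _ _ _ _ le_rfl]
        simp
      have h2 : (q' ++ false :: r').getD q.length false = q'.getD q.length false :=
        List.getD_append _ _ _ _ hlt
      rw [← h2, ← h, h1]
    have hpre := hq'.2.2 (q.length + 1)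
    have hsp : q'.take (q.length + 1) = q'.take q.length ++ [q'.getD q.length false] := by
      rw [List.getD_eq_getElem q' false hlt]
      exact (List.take_concat_get' q' q.length hlt).symm
    rw [hsp, hgd, ← htake] at hpre
    simp [List.count_append] at hpre
    omega
  · have := List.append_inj h heq
    exact this.1

lemma decomp_uniq {a a' : ℕ} {q q' r r' : List Bool}
    (hq : IsDyckPath a q) (hq' : IsDyckPath a' q')
    (h : q ++ false :: r = q' ++ false :: r') : q = q' ∧ r = r' := by
  have hqq : q = q' := by
    rcases le_total q.length q'.length with hle | hle
    · exact decomp_uniq_aux hq hq' hle h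
    · exact (decomp_uniq_aux hq' hq hle h.symm).symm
  subst hqq
  refine ⟨rfl, ?_⟩
  have := List.append_inj h rfl
  simpa using this.2

end DyckAux
namespace DyckAux
open Finset

def listsLen : ℕ → Finset (List Bool)
  | 0 => {[]}
  | n+1 => (listsLen n).biUnion (fun l => {true :: l, false :: l})

lemma mem_listsLen (n : ℕ) (p : List Bool) : p ∈ listsLen n ↔ p.length = n := by
  induction n generalizing p with
  | zero => cases p <;> simp [listsLen]
  | succ n ih =>
    cases p with
    | nil => simp [listsLen]
    | cons x t =>
      simp only [listsLen, mem_biUnion, Finset.mem_insert, Finset.mem_singleton,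
        List.length_cons, add_left_inj]
      constructor
      · rintro ⟨l, hl, h | h⟩ <;>
          (rw [List.cons.injEq] at h; rw [h.2]; exact (ih l).mp hl)
      · intro h
        cases x
        · exact ⟨t, (ih t).mpr h, Or.inr rfl⟩
        · exact ⟨t, (ih t).mpr h, Or.inl rfl⟩

open scoped Classical in
noncomputable def D (c n k : ℕ) : Finset (List Bool) :=
  (listsLen (2*n)).filter (fun p => IsDyckPath n p ∧ upStepsMod 3 c p = k)

lemma mem_D {c n k : ℕ} {p : List Bool} :
    p ∈ D c n k ↔ IsDyckPath n p ∧ upStepsMod 3 c p = k := by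
  classical
  rw [D, Finset.mem_filter, mem_listsLen]
  constructor
  · exact fun h => h.2
  · exact fun h => ⟨h.1.1, h⟩

lemma card_D (c n k : ℕ) :
    Nat.card {p : List Bool // IsDyckPath n p ∧ upStepsMod 3 c p = k} = (D c n k).card := by
  rw [Nat.card_congr (Equiv.subtypeEquivRight (fun p => mem_D.symm))]
  exact Nat.card_eq_finsetCard _

lemma isDyckPath_nil : IsDyckPath 0 [] := ⟨rfl, rfl, by simp⟩

lemma card_D_zero (c k : ℕ) : (D c 0 k).card = if k = 0 then 1 else 0 := by
  have : D c 0 k = if k = 0 then {[]} else ∅ := by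
    ext p
    rw [mem_D]
    constructor
    · rintro ⟨hd, hcnt⟩
      have : p = [] := by
        have := hd.1
        cases p
        · rfl
        · simp at this
      subst this
      have : upStepsMod 3 c [] = 0 := by simp [upStepsMod]
      rw [this] at hcnt
      simp [← hcnt]
    · intro hp
      by_cases hk : k = 0
      · rw [if_pos hk] at hp
        simp at hp
        subst hp
        exact ⟨isDyckPath_nil, by simp [upStepsMod, hk]⟩
      · rw [if_neg hk] at hp
        simp at hp
  rw [this]
  split_ifs <;> simp

lemma upStepsMod_one_pos {n : ℕ} {p : List Bool} (h : IsDyckPath (n+1) p) :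
    upStepsMod 3 1 p ≠ 0 := by
  obtain ⟨t, rfl⟩ := head_true_of_dyck h
  intro hzero
  rw [upStepsMod, Finset.card_eq_zero] at hzero
  have h0 : (0 : ℕ) ∈ (Finset.range (true :: t).length).filter
      (fun i => (true :: t).getD i false = true ∧ stepHeight (true :: t) i % 3 = 1) := by
    rw [Finset.mem_filter, Finset.mem_range]
    refine ⟨by simp, rfl, ?_⟩
    have : stepHeight (true :: t) 0 = 1 := by
      simp [stepHeight]
    rw [this]
  rw [hzero] at h0
  simp at h0

lemma card_D_one_zero (n : ℕ) : (D 1 (n+1) 0).card = 0 := by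
  rw [Finset.card_eq_zero]
  ext p
  rw [mem_D]
  simp only [Finset.notMem_empty, iff_false]
  rintro ⟨hd, hcnt⟩
  exact upStepsMod_one_pos hd hcnt

lemma card_D_rec (c : ℕ) (hc : c < 3) (n k : ℕ) :
    (D c (n+1) (k + (if c = 1 then 1 else 0))).card
      = ∑ x ∈ Finset.HasAntidiagonal.antidiagonal n ×ˢ Finset.HasAntidiagonal.antidiagonal k,
          (D ((c+2)%3) x.1.1 x.2.1).card * (D c x.1.2 x.2.2).card := by
  classical
  have hrw : D c (n+1) (k + (if c = 1 then 1 else 0))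
      = (Finset.HasAntidiagonal.antidiagonal n ×ˢ Finset.HasAntidiagonal.antidiagonal k).biUnion
          (fun x => ((D ((c+2)%3) x.1.1 x.2.1) ×ˢ (D c x.1.2 x.2.2)).image
            (fun qr => true :: qr.1 ++ false :: qr.2)) := by
    ext p
    simp only [mem_biUnion, Finset.mem_product, Finset.HasAntidiagonal.mem_antidiagonal, Finset.mem_image]
    constructor
    · rintro hpm
      rw [mem_D] at hpm
      obtain ⟨hdp, hcnt⟩ := hpm
      obtain ⟨a, b, q, r, hab, hq, hr, rfl⟩ := exists_decomp hdp
      rw [upStepsMod_comp hq hr c hc] at hcnt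
      refine ⟨((a, b), (upStepsMod 3 ((c+2)%3) q, upStepsMod 3 c r)),
        ?_, (q, r), ?_, rfl⟩
      · dsimp only
        exact ⟨hab, by omega⟩
      · dsimp only
        rw [mem_D, mem_D]
        exact ⟨⟨hq, rfl⟩, hr, rfl⟩
    · rintro ⟨⟨⟨a, b⟩, ⟨j, l⟩⟩, ⟨hab, hjl⟩, ⟨q, r⟩, hmem, rfl⟩
      dsimp only at hab hjl hmem
      rw [mem_D, mem_D] at hmem
      obtain ⟨⟨hq, hqc⟩, hr, hrc⟩ := hmem
      rw [mem_D]
      constructor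
      · have := isDyckPath_comp hq hr
        rwa [hab] at this
      · rw [upStepsMod_comp hq hr c hc, hqc, hrc]
        omega
  rw [hrw, Finset.card_biUnion]
  · refine Finset.sum_congr rfl ?_
    intro x hx
    rw [Finset.card_image_of_injOn, Finset.card_product]
    rintro ⟨q, r⟩ hqr ⟨q', r'⟩ hqr' heq
    simp only [Finset.mem_coe, Finset.mem_product, mem_D] at hqr hqr'
    simp only [List.cons_append, List.cons.injEq, true_and] at heq
    obtain ⟨h1, h2⟩ := decomp_uniq hqr.1.1 hqr'.1.1 heq
    simp [h1, h2]
  · rintro ⟨⟨a, b⟩, ⟨j, l⟩⟩ hx ⟨⟨a', b'⟩, ⟨j', l'⟩⟩ hy hne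
    rw [Function.onFun, Finset.disjoint_left]
    rintro p hp hp'
    simp only [Finset.mem_image] at hp hp'
    obtain ⟨⟨q, r⟩, hmem, rfl⟩ := hp
    obtain ⟨⟨q', r'⟩, hmem', heq⟩ := hp'
    rw [Finset.mem_product] at hmem hmem'
    dsimp only at hmem hmem'
    rw [mem_D, mem_D] at hmem hmem'
    obtain ⟨⟨hq, hqc⟩, hr, hrc⟩ := hmem
    obtain ⟨⟨hq', hqc'⟩, hr', hrc'⟩ := hmem'
    simp only [List.cons_append, List.cons.injEq, true_and] at heq
    obtain ⟨h1, h2⟩ := decomp_uniq hq' hq heq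
    subst h1; subst h2
    apply hne
    have e1 : a = a' := by have := hq.1; have := hq'.1; omega
    have e2 : b = b' := by have := hr.1; have := hr'.1; omega
    have e3 : j = j' := by rw [← hqc, ← hqc']
    have e4 : l = l' := by rw [← hrc, ← hrc']
    simp [e1, e2, e3, e4]

end DyckAux
namespace DyckAux
open Finset MvPowerSeries

noncomputable def A (c : ℕ) : MvPowerSeries (Fin 2) ℚ :=
  fun d => ((D c (d 0) (d 1)).card : ℚ)

lemma coeff_A (c : ℕ) (d : Fin 2 →₀ ℕ) :
    (coeff d) (A c) = ((D c (d 0) (d 1)).card : ℚ) := rfl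

noncomputable def pt (a b : ℕ) : Fin 2 →₀ ℕ := Finsupp.single 0 a + Finsupp.single 1 b

@[simp] lemma pt_zero (a b : ℕ) : pt a b 0 = a := by
  simp [pt, Finsupp.single_apply]

@[simp] lemma pt_one (a b : ℕ) : pt a b 1 = b := by
  simp [pt, Finsupp.single_apply]

lemma finsupp_fin2_eq {f g : Fin 2 →₀ ℕ} (h0 : f 0 = g 0) (h1 : f 1 = g 1) : f = g := by
  ext i
  fin_cases i
  · exact h0
  · exact h1

lemma eq_pt (d : Fin 2 →₀ ℕ) : d = pt (d 0) (d 1) := finsupp_fin2_eq (by simp) (by simp)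

lemma finsupp_fin2_le {f g : Fin 2 →₀ ℕ} : f ≤ g ↔ f 0 ≤ g 0 ∧ f 1 ≤ g 1 := by
  rw [Finsupp.le_def]
  constructor
  · exact fun h => ⟨h 0, h 1⟩
  · intro h i
    fin_cases i
    · exact h.1
    · exact h.2

lemma sum_antidiagonal_fin2 (w : Fin 2 →₀ ℕ) (f : ℕ → ℕ → ℕ → ℕ → ℚ) :
    ∑ p ∈ Finset.HasAntidiagonal.antidiagonal w, f (p.1 0) (p.1 1) (p.2 0) (p.2 1)
      = ∑ x ∈ Finset.HasAntidiagonal.antidiagonal (w 0) ×ˢ Finset.HasAntidiagonal.antidiagonal (w 1),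
          f x.1.1 x.2.1 x.1.2 x.2.2 := by
  apply Finset.sum_nbij' (fun p => ((p.1 0, p.2 0), (p.1 1, p.2 1)))
    (fun x => (pt x.1.1 x.2.1, pt x.1.2 x.2.2))
  · intro p hp
    rw [Finset.HasAntidiagonal.mem_antidiagonal] at hp
    rw [Finset.mem_product, Finset.HasAntidiagonal.mem_antidiagonal, Finset.HasAntidiagonal.mem_antidiagonal]
    constructor
    · have := congrArg (fun u => u 0) hp
      simpa using this
    · have := congrArg (fun u => u 1) hp
      simpa using this
  · intro x hx
    rw [Finset.mem_product, Finset.HasAntidiagonal.mem_antidiagonal, Finset.HasAntidiagonal.mem_antidiagonal] at hx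
    rw [Finset.HasAntidiagonal.mem_antidiagonal]
    apply finsupp_fin2_eq
    · simp [hx.1]
    · simp [hx.2]
  · intro p hp
    apply Prod.ext
    · exact (eq_pt p.1).symm
    · exact (eq_pt p.2).symm
  · intro x hx
    simp
  · intro p hp
    simp

lemma A_eq (c : ℕ) (hc : c < 3) :
    A c = 1 + (monomial (pt 1 (if c = 1 then 1 else 0)) 1) * (A ((c+2)%3) * A c) := by
  classical
  ext d
  rw [map_add, coeff_one, coeff_monomial_mul, coeff_A]
  by_cases hd0 : d 0 = 0
  · -- no decomposition possible
    have hnle : ¬ pt 1 (if c = 1 then 1 else 0) ≤ d := by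
      intro hcon
      have := (finsupp_fin2_le.mp hcon).1
      rw [pt_zero, hd0] at this
      omega
    rw [if_neg hnle]
    by_cases hd : d = 0
    · have hd1 : d 1 = 0 := by rw [hd]; simp
      rw [if_pos hd, hd0, hd1, card_D_zero]
      simp
    · have hd1 : d 1 ≠ 0 := by
        intro h1
        exact hd (finsupp_fin2_eq (by simpa using hd0) (by simpa using h1))
      rw [if_neg hd, hd0, card_D_zero, if_neg hd1]
      simp
  · obtain ⟨n, hn⟩ : ∃ n, d 0 = n + 1 := ⟨d 0 - 1, by omega⟩
    have hdne : d ≠ 0 := by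
      intro h; rw [h] at hd0; exact hd0 rfl
    rw [if_neg hdne]
    by_cases hle : pt 1 (if c = 1 then 1 else 0) ≤ d
    · rw [if_pos hle, one_mul, coeff_mul]
      have hle1 : (if c = 1 then 1 else 0) ≤ d 1 := by
        have := (finsupp_fin2_le.mp hle).2
        rwa [pt_one] at this
      set k := d 1 - (if c = 1 then 1 else 0) with hk
      have hw0 : (d - pt 1 (if c = 1 then 1 else 0)) 0 = n := by
        rw [Finsupp.tsub_apply]; simp [hn]
      have hw1 : (d - pt 1 (if c = 1 then 1 else 0)) 1 = k := by
        rw [Finsupp.tsub_apply]; simp [hk]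
      have hrec := card_D_rec c hc n k
      have hd1 : d 1 = k + (if c = 1 then 1 else 0) := by omega
      rw [hn, hd1, hrec]
      have := sum_antidiagonal_fin2 (d - pt 1 (if c = 1 then 1 else 0))
        (fun u1 u2 v1 v2 => ((D ((c+2)%3) u1 u2).card * (D c v1 v2).card : ℚ))
      rw [hw0, hw1] at this
      rw [show (∑ p ∈ Finset.HasAntidiagonal.antidiagonal (d - pt 1 (if c = 1 then 1 else 0)),
          (coeff p.1) (A ((c+2)%3)) * (coeff p.2) (A c)) = _ from this]
      rw [zero_add]
      push_cast
      rfl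
    · rw [if_neg hle]
      have hc1 : c = 1 ∧ d 1 = 0 := by
        rw [finsupp_fin2_le] at hle
        push_neg at hle
        by_cases h : c = 1
        · refine ⟨h, ?_⟩
          have := hle (by simp; omega)
          simp [h] at this
          omega
        · exfalso
          have := hle (by simp; omega)
          simp [h] at this
      rw [hn, hc1.2, hc1.1, card_D_one_zero]
      simp

end DyckAux

namespace DyckAux
open MvPowerSeries

lemma monomial_pt10 : (monomial (pt 1 0) 1 : MvPowerSeries (Fin 2) ℚ) = X 0 := by
  have : pt 1 0 = Finsupp.single (0 : Fin 2) 1 := by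
    simp [pt]
  rw [this, X]

lemma monomial_pt11 : (monomial (pt 1 1) 1 : MvPowerSeries (Fin 2) ℚ) = X 0 * X 1 := by
  rw [X, X, monomial_mul_monomial, one_mul]
  rfl

end DyckAux


open MvPowerSeries in
/-- `G` satisfies `x·y·(1-x)·G² - (1 - 2x + x·y)·G + (1-x) = 0`. -/
theorem G_algebraic_equation :
    (X 0 : MvPowerSeries (Fin 2) ℚ) * X 1 * (1 - X 0) * G ^ 2
      - (1 - 2 * X 0 + X 0 * X 1) * G + (1 - X 0) = 0 := by
  have hG : G = DyckAux.A 0 := by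
    funext d
    show ((Nat.card _ : ℕ) : ℚ) = _
    rw [DyckAux.card_D 0 (d 0) (d 1)]
    rfl
  have h0 := DyckAux.A_eq 0 (by norm_num)
  have h1 := DyckAux.A_eq 1 (by norm_num)
  have h2 := DyckAux.A_eq 2 (by norm_num)
  norm_num at h0 h1 h2
  rw [DyckAux.monomial_pt10] at h0 h2
  rw [DyckAux.monomial_pt11] at h1
  rw [hG]
  linear_combination (-(1 - X 0 - X 0 * X 1 * DyckAux.A 0)) * h0
    + (-((X 0)^2 * DyckAux.A 0 * DyckAux.A 2)) * h1
    + (-(X 0 * DyckAux.A 0 * (1 - X 0 * X 1 * DyckAux.A 0))) * h2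
end

section
/- For every n ≥ 1, there is a bijection on the set of ordered trees with n edges carrying trees with exactly k exterior edges to trees with exactly k edges at level h with h ≡ 0 (mod 3), for every 0 ≤ k ≤ n-2. In particular, for each k the number of ordered trees with n edges and k exterior edges equals the number of ordered trees with n edges and k edges at level divisible by 3. -/
/-- An ordered (plane) tree: an unlabeled rooted tree where the order of the subtrees
of each vertex is significant. -/
inductive OTree where
  | node : List OTree → OTree

namespace OTree

/-- The number of edges of an ordered tree. -/
def numEdges : OTree → ℕ
  | .node ts => (ts.attach.map (fun c => numEdges c.1 + 1)).sum
  decreasing_by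
    simp_wf
    have := List.sizeOf_lt_of_mem c.2
    simp at this ⊢
    omega


/-- The number of leaves of an ordered tree (a tree with no edges has one leaf,
its root). -/
def numLeaves : OTree → ℕ
  | .node [] => 1
  | .node (t :: ts) => ((t :: ts).attach.map (fun c => numLeaves c.1)).sum
  decreasing_by
    simp_wf
    have := List.sizeOf_lt_of_mem c.2
    simp at this ⊢
    omega


/-- The number of exterior edges: edges `uv` such that the planted subtree consisting
of `uv` and all descendants of `v` has at least two leaves. -/
def extEdges : OTree → ℕ
  | .node ts => (ts.attach.map
      (fun c => (if 2 ≤ numLeaves c.1 then 1 else 0) + extEdges c.1)).sum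
  decreasing_by
    simp_wf
    have := List.sizeOf_lt_of_mem c.2
    simp at this ⊢
    omega


/-- `edgesAtLevelFrom t cur h` is the number of edges of `t` at level `h`, where the
root of `t` is at distance `cur` from the global root (the level of an edge `uv` is
the distance from the root to the child `v`). -/
def edgesAtLevelFrom (t : OTree) (cur h : ℕ) : ℕ :=
  match t with
  | .node ts => (ts.attach.map
      (fun c => (if cur + 1 = h then 1 else 0) + edgesAtLevelFrom c.1 (cur + 1) h)).sum
  termination_by t
  decreasing_by
    simp_wf
    have := List.sizeOf_lt_of_mem c.2
    simp at this ⊢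
    omega


/-- The number of edges of `t` at level `h`. -/
def edgesAtLevel (t : OTree) (h : ℕ) : ℕ := edgesAtLevelFrom t 0 h

/-- `edgesLevelModFrom t cur m c`: the number of edges of `t` at level `h` with
`h ≡ c (mod m)`, the root being at distance `cur` from the global root. -/
def edgesLevelModFrom (t : OTree) (cur m c : ℕ) : ℕ :=
  match t with
  | .node ts => (ts.attach.map
      (fun x => (if (cur + 1) % m = c then 1 else 0) +
        edgesLevelModFrom x.1 (cur + 1) m c)).sum
  termination_by t
  decreasing_by
    simp_wf
    have := List.sizeOf_lt_of_mem x.2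
    simp at this ⊢
    omega


/-- The number of edges of `t` at level `h` with `h ≡ c (mod m)`. -/
def edgesLevelMod (t : OTree) (m c : ℕ) : ℕ := edgesLevelModFrom t 0 m c

/-- The preorder traversal word of an ordered tree: each edge contributes a `true`
(up step) when first passed going down and a `false` (down step) when passed going
up. -/
def toPath : OTree → List Bool
  | .node ts => (ts.attach.map (fun c => true :: (toPath c.1 ++ [false]))).flatten
  decreasing_by
    simp_wf
    have := List.sizeOf_lt_of_mem c.2
    simp at this ⊢
    omega


end OTree

namespace OTree

theorem sum_attach (l : List OTree) (f : OTree → ℕ) :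
    (l.attach.map (fun c => f c.1)).sum = (l.map f).sum := by
  rw [show (fun (c : {x // x ∈ l}) => f c.1) = f ∘ Subtype.val from rfl, ← List.map_map,
    List.attach_map_subtype_val]

theorem ind (P : OTree → Prop) (h : ∀ ts : List OTree, (∀ t ∈ ts, P t) → P (.node ts)) :
    ∀ t, P t
  | .node ts => h ts (fun t _ => ind P h t)
  decreasing_by
    rename_i ht
    have := List.sizeOf_lt_of_mem ht
    simp at this ⊢
    omega

theorem numEdges_eq (ts : List OTree) :
    numEdges (.node ts) = (ts.map (fun t => numEdges t + 1)).sum := by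
  rw [numEdges]; exact sum_attach ts (fun t => numEdges t + 1)

theorem extEdges_eq (ts : List OTree) :
    extEdges (.node ts) =
      (ts.map (fun t => (if 2 ≤ numLeaves t then 1 else 0) + extEdges t)).sum := by
  rw [extEdges]; exact sum_attach ts (fun t => (if 2 ≤ numLeaves t then 1 else 0) + extEdges t)

theorem elmf_eq (ts : List OTree) (cur m c : ℕ) :
    edgesLevelModFrom (.node ts) cur m c =
      (ts.map (fun t => (if (cur + 1) % m = c then 1 else 0)
        + edgesLevelModFrom t (cur + 1) m c)).sum := by
  rw [edgesLevelModFrom]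
  exact sum_attach ts (fun t => (if (cur + 1) % m = c then 1 else 0) + edgesLevelModFrom t (cur + 1) m c)

theorem numLeaves_cons (t : OTree) (ts : List OTree) :
    numLeaves (.node (t :: ts)) = numLeaves t + (ts.map numLeaves).sum := by
  rw [numLeaves, sum_attach _ numLeaves]; simp

theorem numEdges_nil : numEdges (.node []) = 0 := by simp [numEdges_eq]

theorem numEdges_cons (t : OTree) (ts : List OTree) :
    numEdges (.node (t :: ts)) = numEdges t + 1 + numEdges (.node ts) := by
  simp [numEdges_eq]

theorem extEdges_nil : extEdges (.node []) = 0 := by simp [extEdges_eq]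

theorem extEdges_cons (t : OTree) (ts : List OTree) :
    extEdges (.node (t :: ts)) =
      ((if 2 ≤ numLeaves t then 1 else 0) + extEdges t) + extEdges (.node ts) := by
  simp [extEdges_eq]

theorem elmf_nil (cur m c : ℕ) : edgesLevelModFrom (.node []) cur m c = 0 := by
  simp [elmf_eq]

theorem elmf_cons (t : OTree) (ts : List OTree) (cur m c : ℕ) :
    edgesLevelModFrom (.node (t :: ts)) cur m c =
      ((if (cur + 1) % m = c then 1 else 0) + edgesLevelModFrom t (cur + 1) m c)
        + edgesLevelModFrom (.node ts) cur m c := by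
  simp [elmf_eq]

theorem one_le_numLeaves (t : OTree) : 1 ≤ numLeaves t := by
  induction t using ind with
  | h ts ih =>
    cases ts with
    | nil => rw [numLeaves]
    | cons a as => rw [numLeaves_cons]; have := ih a (by simp); omega

theorem elmf_congr (t : OTree) {cur cur' : ℕ} (m c : ℕ) (h : cur % m = cur' % m) :
    edgesLevelModFrom t cur m c = edgesLevelModFrom t cur' m c := by
  induction t using ind generalizing cur cur' with
  | h ts ih =>
    rw [elmf_eq, elmf_eq]
    congr 1
    apply List.map_congr_left
    intro a ha
    have h1 : (cur + 1) % m = (cur' + 1) % m := by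
      conv_lhs => rw [Nat.add_mod, h, ← Nat.add_mod]
    rw [ih a ha h1, h1]

end OTree
namespace OTree

/-- The chain (path) tree with `n` edges. -/
def chain : ℕ → OTree
  | 0 => .node []
  | n + 1 => .node [chain n]

theorem numEdges_chain (n : ℕ) : numEdges (chain n) = n := by
  induction n with
  | zero => simp [chain, numEdges_eq]
  | succ n ih => simp [chain, numEdges_eq, ih]

theorem numLeaves_chain (n : ℕ) : numLeaves (chain n) = 1 := by
  induction n with
  | zero => rw [chain, numLeaves]
  | succ n ih => rw [chain, numLeaves_cons]; simp [ih]

theorem extEdges_of_leaves_le_one (t : OTree) (h : numLeaves t ≤ 1) : extEdges t = 0 := by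
  induction t using ind with
  | h ts ih =>
    cases ts with
    | nil => exact extEdges_nil
    | cons a as =>
      rw [numLeaves_cons] at h
      have ha := one_le_numLeaves a
      have has : (as.map numLeaves).sum = 0 := by omega
      have hanil : as = [] := by
        cases as with
        | nil => rfl
        | cons b bs => exfalso; simp at has; have := one_le_numLeaves b; omega
      subst hanil
      rw [extEdges_cons, extEdges_nil]
      have h2 : ¬ 2 ≤ numLeaves a := by omega
      rw [if_neg h2, ih a (by simp) (by omega)]

theorem eq_chain_of_leaves_le_one (t : OTree) (h : numLeaves t ≤ 1) :
    t = chain (numEdges t) := by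
  induction t using ind with
  | h ts ih =>
    cases ts with
    | nil => rw [numEdges_nil]; rfl
    | cons a as =>
      rw [numLeaves_cons] at h
      have ha := one_le_numLeaves a
      have hanil : as = [] := by
        cases as with
        | nil => rfl
        | cons b bs => exfalso; simp at h; have := one_le_numLeaves b; omega
      subst hanil
      have hc := ih a (by simp) (by omega)
      rw [numEdges_cons, numEdges_nil]
      rw [show numEdges a + 1 + 0 = numEdges a + 1 from rfl, chain, ← hc]

/-- Split a nonempty tree into its first child subtree and the rest. -/
def split : OTree → OTree × OTree
  | .node [] => (.node [], .node [])
  | .node (a :: ts) => (a, .node ts)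

/-- Inverse of `split`: prepend the first tree as first child subtree of the second. -/
def unsplit : OTree × OTree → OTree
  | (a, .node ts) => .node (a :: ts)

theorem split_unsplit (p : OTree × OTree) : split (unsplit p) = p := by
  obtain ⟨a, b⟩ := p; cases b with | node ts => rfl

theorem unsplit_split (t : OTree) (h : t ≠ .node []) : unsplit (split t) = t := by
  cases t with
  | node ts => cases ts with
    | nil => exact absurd rfl h
    | cons a as => rfl

theorem numEdges_unsplit (p : OTree × OTree) :
    numEdges (unsplit p) = numEdges p.1 + 1 + numEdges p.2 := by
  obtain ⟨a, b⟩ := p; cases b with | node ts => exact numEdges_cons a ts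

theorem extEdges_unsplit (p : OTree × OTree) :
    extEdges (unsplit p) =
      ((if 2 ≤ numLeaves p.1 then 1 else 0) + extEdges p.1) + extEdges p.2 := by
  obtain ⟨a, b⟩ := p; cases b with | node ts => exact extEdges_cons a ts

theorem elmf_unsplit (p : OTree × OTree) (cur m c : ℕ) :
    edgesLevelModFrom (unsplit p) cur m c =
      ((if (cur + 1) % m = c then 1 else 0) + edgesLevelModFrom p.1 (cur + 1) m c)
        + edgesLevelModFrom p.2 cur m c := by
  obtain ⟨a, b⟩ := p; cases b with | node ts => exact elmf_cons a ts cur m c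

theorem ne_nil_of_numEdges_pos (t : OTree) (h : 1 ≤ numEdges t) : t ≠ .node [] := by
  intro he; rw [he, numEdges_nil] at h; omega

theorem numEdges_eq_zero (t : OTree) (h : numEdges t = 0) : t = .node [] := by
  cases t with
  | node ts => cases ts with
    | nil => rfl
    | cons a as => rw [numEdges_cons] at h; omega

theorem finite_le (n : ℕ) : Finite {t : OTree // numEdges t ≤ n} := by
  induction n with
  | zero =>
    have : ∀ x : {t : OTree // numEdges t ≤ 0}, x = ⟨.node [], by rw [numEdges_nil]⟩ := by
      rintro ⟨t, ht⟩
      exact Subtype.ext (numEdges_eq_zero t (by omega))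
    have : Subsingleton {t : OTree // numEdges t ≤ 0} := ⟨fun a b => (this a).trans (this b).symm⟩
    exact Finite.of_subsingleton
  | succ n ih =>
    haveI := ih
    classical
    haveI : Finite (Option ({t : OTree // numEdges t ≤ n} × {t : OTree // numEdges t ≤ n})) :=
      Finite.of_surjective
        (fun x : ({t : OTree // numEdges t ≤ n} × {t : OTree // numEdges t ≤ n}) ⊕ Unit =>
          x.elim some (fun _ => none))
        (fun o => by cases o with | none => exact ⟨.inr (), rfl⟩ | some a => exact ⟨.inl a, rfl⟩)
    apply Finite.of_injective (α := {t : OTree // numEdges t ≤ n + 1})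
      (β := Option ({t : OTree // numEdges t ≤ n} × {t : OTree // numEdges t ≤ n}))
      (fun x => if h : x.1 = .node [] then none else
        some (⟨(split x.1).1, by
            have := numEdges_unsplit (split x.1)
            rw [unsplit_split x.1 h] at this
            omega⟩,
          ⟨(split x.1).2, by
            have := numEdges_unsplit (split x.1)
            rw [unsplit_split x.1 h] at this
            omega⟩))
    intro x y hxy
    by_cases hx : x.1 = .node [] <;> by_cases hy : y.1 = .node []
    · exact Subtype.ext (hx.trans hy.symm)
    · simp [hx, hy] at hxy
    · simp [hx, hy] at hxy
    · simp only [dif_neg hx, dif_neg hy, Option.some_inj, Prod.ext_iff, Subtype.mk.injEq] at hxy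
      apply Subtype.ext
      rw [← unsplit_split x.1 hx, ← unsplit_split y.1 hy]
      congr 1
      exact Prod.ext hxy.1 hxy.2

end OTree
namespace OTree

theorem finite_pred (n : ℕ) (R : OTree → Prop) (h : ∀ t, R t → numEdges t = n) :
    Finite {t : OTree // R t} := by
  haveI := finite_le n
  exact Finite.of_injective (β := {t : OTree // numEdges t ≤ n})
    (fun x => ⟨x.1, le_of_eq (h x.1 x.2)⟩)
    (fun x y hxy => Subtype.ext (by simpa using congrArg Subtype.val hxy))

theorem nat_card_sigma {ι : Type*} [Fintype ι] (F : ι → Type*) [∀ i, Finite (F i)] :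
    Nat.card (Σ i, F i) = ∑ i, Nat.card (F i) := by
  classical
  haveI : ∀ i, Fintype (F i) := fun i => Fintype.ofFinite _
  rw [Nat.card_eq_fintype_card, Fintype.card_sigma]
  simp [Nat.card_eq_fintype_card]

theorem card_split {α : Type*} (P Q : α → Prop) [Finite {x : α // P x}] :
    Nat.card {x : α // P x} =
      Nat.card {x : α // P x ∧ Q x} + Nat.card {x : α // P x ∧ ¬ Q x} := by
  classical
  haveI : Finite {x : α // P x ∧ Q x} :=
    Finite.of_injective (β := {x : α // P x}) (fun x => ⟨x.1, x.2.1⟩)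
      (fun x y hxy => Subtype.ext (by simpa using congrArg Subtype.val hxy))
  haveI : Finite {x : α // P x ∧ ¬ Q x} :=
    Finite.of_injective (β := {x : α // P x}) (fun x => ⟨x.1, x.2.1⟩)
      (fun x y hxy => Subtype.ext (by simpa using congrArg Subtype.val hxy))
  rw [← Nat.card_sum]
  apply Nat.card_congr
  refine ⟨fun x => if h : Q x.1 then .inl ⟨x.1, x.2, h⟩ else .inr ⟨x.1, x.2, h⟩,
    fun s => s.elim (fun x => ⟨x.1, x.2.1⟩) (fun x => ⟨x.1, x.2.1⟩), ?_, ?_⟩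
  · intro x; by_cases h : Q x.1 <;> simp [h]
  · rintro (x | x)
    · simp [x.2.2]
    · simp [x.2.2]

end OTree
namespace OTree

set_option maxHeartbeats 1000000 in
theorem card_conv (v w : OTree → ℕ) (Q : OTree → Prop) (m k : ℕ) :
    Nat.card {p : OTree × OTree //
        (numEdges p.1 + numEdges p.2 = m ∧ v p.1 + w p.2 = k) ∧ Q p.1} =
    ∑ ab ∈ Finset.HasAntidiagonal.antidiagonal m, ∑ cd ∈ Finset.HasAntidiagonal.antidiagonal k,
      Nat.card {t : OTree // (numEdges t = ab.1 ∧ v t = cd.1) ∧ Q t} *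
      Nat.card {t : OTree // numEdges t = ab.2 ∧ w t = cd.2} := by
  classical
  set s : Finset ((ℕ × ℕ) × (ℕ × ℕ)) := Finset.HasAntidiagonal.antidiagonal m ×ˢ Finset.HasAntidiagonal.antidiagonal k with hs
  let F : s → Type := fun i =>
    {t : OTree // (numEdges t = i.1.1.1 ∧ v t = i.1.2.1) ∧ Q t} ×
    {t : OTree // numEdges t = i.1.1.2 ∧ w t = i.1.2.2}
  haveI : ∀ i : s, Finite (F i) := by
    intro i
    haveI := finite_pred i.1.1.1 (fun t => (numEdges t = i.1.1.1 ∧ v t = i.1.2.1) ∧ Q t)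
      (fun t ht => ht.1.1)
    haveI := finite_pred i.1.1.2 (fun t => numEdges t = i.1.1.2 ∧ w t = i.1.2.2)
      (fun t ht => ht.1)
    exact Finite.instProd
  have hbij : Function.Bijective (fun x : Σ i : s, F i =>
      (⟨(x.2.1.1, x.2.2.1), by
        obtain ⟨⟨i, hi⟩, a, b⟩ := x
        rw [hs, Finset.mem_product, Finset.HasAntidiagonal.mem_antidiagonal, Finset.HasAntidiagonal.mem_antidiagonal] at hi
        refine ⟨⟨?_, ?_⟩, a.2.2⟩
        · rw [a.2.1.1, b.2.1]; exact hi.1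
        · rw [a.2.1.2, b.2.2]; exact hi.2⟩ :
        {p : OTree × OTree //
          (numEdges p.1 + numEdges p.2 = m ∧ v p.1 + w p.2 = k) ∧ Q p.1})) := by
    constructor
    · rintro ⟨⟨⟨⟨i1, i2⟩, i3, i4⟩, hi⟩, a, b⟩ ⟨⟨⟨⟨j1, j2⟩, j3, j4⟩, hj⟩, c, d⟩ h
      simp only [Subtype.mk.injEq, Prod.mk.injEq] at h
      obtain ⟨hac, hbd⟩ := h
      have ha1 : numEdges a.1 = i1 := a.2.1.1
      have ha3 : v a.1 = i3 := a.2.1.2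
      have hb2 : numEdges b.1 = i2 := b.2.1
      have hb4 : w b.1 = i4 := b.2.2
      have hc1 : numEdges c.1 = j1 := c.2.1.1
      have hc3 : v c.1 = j3 := c.2.1.2
      have hd2 : numEdges d.1 = j2 := d.2.1
      have hd4 : w d.1 = j4 := d.2.2
      have e1 : i1 = j1 := by rw [← ha1, ← hc1, hac]
      have e2 : i2 = j2 := by rw [← hb2, ← hd2, hbd]
      have e3 : i3 = j3 := by rw [← ha3, ← hc3, hac]
      have e4 : i4 = j4 := by rw [← hb4, ← hd4, hbd]
      subst e1; subst e2; subst e3; subst e4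
      have : a = c := Subtype.ext hac
      have h2 : b = d := Subtype.ext hbd
      subst this; subst h2
      rfl
    · rintro ⟨⟨p1, p2⟩, ⟨⟨hm, hk⟩, hq⟩⟩
      refine ⟨⟨⟨((numEdges p1, numEdges p2), (v p1, w p2)), ?_⟩,
        ⟨p1, ⟨⟨rfl, rfl⟩, hq⟩⟩, ⟨p2, ⟨rfl, rfl⟩⟩⟩, rfl⟩
      rw [hs, Finset.mem_product, Finset.HasAntidiagonal.mem_antidiagonal, Finset.HasAntidiagonal.mem_antidiagonal]
      exact ⟨hm, hk⟩
  rw [← Nat.card_congr (Equiv.ofBijective _ hbij), nat_card_sigma F]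
  have hcard : ∀ i : s, Nat.card (F i) =
      (fun j : (ℕ × ℕ) × (ℕ × ℕ) =>
        Nat.card {t : OTree // (numEdges t = j.1.1 ∧ v t = j.2.1) ∧ Q t} *
        Nat.card {t : OTree // numEdges t = j.1.2 ∧ w t = j.2.2}) i.1 :=
    fun i => Nat.card_prod _ _
  calc ∑ i : s, Nat.card (F i)
      = ∑ i : s, (fun j : (ℕ × ℕ) × (ℕ × ℕ) =>
          Nat.card {t : OTree // (numEdges t = j.1.1 ∧ v t = j.2.1) ∧ Q t} *
          Nat.card {t : OTree // numEdges t = j.1.2 ∧ w t = j.2.2}) i.1 :=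
        Finset.sum_congr rfl (fun i _ => hcard i)
    _ = ∑ j ∈ s, Nat.card {t : OTree // (numEdges t = j.1.1 ∧ v t = j.2.1) ∧ Q t} *
          Nat.card {t : OTree // numEdges t = j.1.2 ∧ w t = j.2.2} :=
        Finset.sum_coe_sort s (fun j : (ℕ × ℕ) × (ℕ × ℕ) =>
          Nat.card {t : OTree // (numEdges t = j.1.1 ∧ v t = j.2.1) ∧ Q t} *
          Nat.card {t : OTree // numEdges t = j.1.2 ∧ w t = j.2.2})
    _ = _ := by rw [hs, Finset.sum_product]

end OTree
namespace OTree

theorem card_subtype_congr {α : Type*} {P Q : α → Prop} (h : ∀ x, P x ↔ Q x) :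
    Nat.card {x // P x} = Nat.card {x // Q x} :=
  Nat.card_congr (Equiv.subtypeEquivRight h)

/-- Number of trees with `n` edges, statistic `s` equal to `k`, satisfying `Q`. -/
noncomputable def cnt (s : OTree → ℕ) (Q : OTree → Prop) (n k : ℕ) : ℕ :=
  Nat.card {t : OTree // (numEdges t = n ∧ s t = k) ∧ Q t}

theorem card_conv' (v w : OTree → ℕ) (Q : OTree → Prop) (m k : ℕ) :
    Nat.card {p : OTree × OTree //
        (numEdges p.1 + numEdges p.2 = m ∧ v p.1 + w p.2 = k) ∧ Q p.1} =
    ∑ ab ∈ Finset.HasAntidiagonal.antidiagonal m, ∑ cd ∈ Finset.HasAntidiagonal.antidiagonal k,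
      cnt v Q ab.1 cd.1 * cnt w (fun _ => True) ab.2 cd.2 := by
  rw [card_conv]
  refine Finset.sum_congr rfl (fun ab _ => Finset.sum_congr rfl (fun cd _ => ?_))
  congr 1
  exact card_subtype_congr (fun t => by tauto)

theorem cnt_zero (s : OTree → ℕ) (Q : OTree → Prop) (hs : s (.node []) = 0)
    (hQ : Q (.node [])) (k : ℕ) : cnt s Q 0 k = if k = 0 then 1 else 0 := by
  rcases Nat.eq_zero_or_pos k with hk | hk
  · subst hk
    rw [if_pos rfl]
    haveI : Unique {t : OTree // (numEdges t = 0 ∧ s t = 0) ∧ Q t} := by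
      refine ⟨⟨⟨.node [], ⟨numEdges_nil, hs⟩, hQ⟩⟩, ?_⟩
      rintro ⟨t, ⟨h1, _⟩, _⟩
      exact Subtype.ext (numEdges_eq_zero t h1)
    exact Nat.card_unique
  · rw [if_neg (by omega)]
    haveI : IsEmpty {t : OTree // (numEdges t = 0 ∧ s t = k) ∧ Q t} := by
      refine ⟨fun x => ?_⟩
      obtain ⟨t, ⟨h1, h2⟩, _⟩ := x
      rw [numEdges_eq_zero t h1] at h2
      rw [hs] at h2
      omega
    exact Nat.card_of_isEmpty

/-- Step: trees with positive edge count correspond to pairs. -/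
theorem cnt_step (s : OTree → ℕ) (m k : ℕ) :
    cnt s (fun _ => True) (m+1) k =
      Nat.card {p : OTree × OTree //
        numEdges (unsplit p) = m + 1 ∧ s (unsplit p) = k} := by
  apply Nat.card_congr
  refine ⟨fun x => ⟨split x.1, ?_⟩, fun p => ⟨unsplit p.1, ⟨p.2, trivial⟩⟩, ?_, ?_⟩
  · rw [unsplit_split x.1 (ne_nil_of_numEdges_pos x.1 (by have := x.2.1.1; omega))]
    exact x.2.1
  · intro x
    exact Subtype.ext (unsplit_split x.1 (ne_nil_of_numEdges_pos x.1 (by have := x.2.1.1; omega)))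
  · intro p
    exact Subtype.ext (split_unsplit p.1)

theorem cnt_shift (s : OTree → ℕ) (Q : OTree → Prop) (n k : ℕ) :
    cnt (fun t => 1 + s t) Q n k = if k = 0 then 0 else cnt s Q n (k - 1) := by
  rcases Nat.eq_zero_or_pos k with hk | hk
  · subst hk
    rw [if_pos rfl]
    haveI : IsEmpty {t : OTree // (numEdges t = n ∧ 1 + s t = 0) ∧ Q t} :=
      ⟨fun x => by have := x.2.1.2; omega⟩
    exact Nat.card_of_isEmpty
  · obtain ⟨k', rfl⟩ : ∃ k', k = k' + 1 := ⟨k - 1, by omega⟩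
    rw [if_neg (by omega), Nat.add_sub_cancel]
    exact card_subtype_congr (fun t => by
      constructor <;> rintro ⟨⟨h1, h2⟩, h3⟩ <;> exact ⟨⟨h1, by simp only [] at h2 ⊢; omega⟩, h3⟩)

theorem cnt_path (n k : ℕ) :
    cnt extEdges (fun t => numLeaves t ≤ 1) n k = if k = 0 then 1 else 0 := by
  rcases Nat.eq_zero_or_pos k with hk | hk
  · subst hk
    rw [if_pos rfl]
    haveI : Unique {t : OTree // (numEdges t = n ∧ extEdges t = 0) ∧ numLeaves t ≤ 1} := by
      refine ⟨⟨⟨chain n, ⟨numEdges_chain n,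
        extEdges_of_leaves_le_one _ (le_of_eq (numLeaves_chain n))⟩,
        le_of_eq (numLeaves_chain n)⟩⟩, ?_⟩
      rintro ⟨t, ⟨h1, _⟩, h3⟩
      apply Subtype.ext
      show t = chain n
      rw [← h1]
      exact eq_chain_of_leaves_le_one t h3
    exact Nat.card_unique
  · rw [if_neg (by omega)]
    haveI : IsEmpty {t : OTree // (numEdges t = n ∧ extEdges t = k) ∧ numLeaves t ≤ 1} := by
      refine ⟨fun x => ?_⟩
      obtain ⟨t, ⟨_, h2⟩, h3⟩ := x
      rw [extEdges_of_leaves_le_one t h3] at h2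
      omega
    exact Nat.card_of_isEmpty

theorem ext_split (n k : ℕ) :
    cnt extEdges (fun _ => True) n k =
      cnt extEdges (fun t => 2 ≤ numLeaves t) n k +
      cnt extEdges (fun t => numLeaves t ≤ 1) n k := by
  haveI : Finite {t : OTree // (numEdges t = n ∧ extEdges t = k) ∧ True} :=
    finite_pred n _ (fun t ht => ht.1.1)
  have := card_split (fun t : OTree => (numEdges t = n ∧ extEdges t = k) ∧ True)
    (fun t => 2 ≤ numLeaves t)
  rw [cnt, this]
  congr 1
  · exact card_subtype_congr (fun t => by tauto)
  · refine card_subtype_congr (fun t => ?_)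
    constructor
    · rintro ⟨⟨h1, _⟩, h2⟩; exact ⟨h1, by omega⟩
    · rintro ⟨h1, h2⟩; exact ⟨⟨h1, trivial⟩, by omega⟩

/-- Level-statistic at root-offset `i`. -/
def sL (i : ℕ) (t : OTree) : ℕ := edgesLevelModFrom t i 3 0

theorem lv_rec0 (m k : ℕ) :
    cnt (sL 0) (fun _ => True) (m+1) k =
      ∑ ab ∈ Finset.HasAntidiagonal.antidiagonal m, ∑ cd ∈ Finset.HasAntidiagonal.antidiagonal k,
        cnt (sL 1) (fun _ => True) ab.1 cd.1 * cnt (sL 0) (fun _ => True) ab.2 cd.2 := by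
  rw [cnt_step, ← card_conv' (sL 1) (sL 0) (fun _ => True) m k]
  refine card_subtype_congr (fun p => ?_)
  simp only [sL]
  rw [numEdges_unsplit, elmf_unsplit]
  norm_num
  omega

theorem lv_rec1 (m k : ℕ) :
    cnt (sL 1) (fun _ => True) (m+1) k =
      ∑ ab ∈ Finset.HasAntidiagonal.antidiagonal m, ∑ cd ∈ Finset.HasAntidiagonal.antidiagonal k,
        cnt (sL 2) (fun _ => True) ab.1 cd.1 * cnt (sL 1) (fun _ => True) ab.2 cd.2 := by
  rw [cnt_step, ← card_conv' (sL 2) (sL 1) (fun _ => True) m k]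
  refine card_subtype_congr (fun p => ?_)
  simp only [sL]
  rw [numEdges_unsplit, elmf_unsplit]
  norm_num
  omega

theorem lv_rec2 (m k : ℕ) :
    cnt (sL 2) (fun _ => True) (m+1) k =
      ∑ ab ∈ Finset.HasAntidiagonal.antidiagonal m, ∑ cd ∈ Finset.HasAntidiagonal.antidiagonal k,
        cnt (fun t => 1 + sL 0 t) (fun _ => True) ab.1 cd.1 *
          cnt (sL 2) (fun _ => True) ab.2 cd.2 := by
  rw [cnt_step, ← card_conv' (fun t => 1 + sL 0 t) (sL 2) (fun _ => True) m k]
  refine card_subtype_congr (fun p => ?_)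
  simp only [sL]
  rw [numEdges_unsplit, elmf_unsplit]
  have h03 : edgesLevelModFrom p.1 (2+1) 3 0 = edgesLevelModFrom p.1 0 3 0 :=
    elmf_congr p.1 3 0 (by norm_num)
  rw [h03]
  simp only [sL]
  norm_num
  omega

theorem ext_rec (m k : ℕ) :
    cnt extEdges (fun _ => True) (m+1) k =
      (∑ ab ∈ Finset.HasAntidiagonal.antidiagonal m, ∑ cd ∈ Finset.HasAntidiagonal.antidiagonal k,
        cnt extEdges (fun t => numLeaves t ≤ 1) ab.1 cd.1 *
          cnt extEdges (fun _ => True) ab.2 cd.2) +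
      (∑ ab ∈ Finset.HasAntidiagonal.antidiagonal m, ∑ cd ∈ Finset.HasAntidiagonal.antidiagonal k,
        cnt (fun t => 1 + extEdges t) (fun t => 2 ≤ numLeaves t) ab.1 cd.1 *
          cnt extEdges (fun _ => True) ab.2 cd.2) := by
  rw [cnt_step]
  haveI : Finite {p : OTree × OTree //
      numEdges (unsplit p) = m + 1 ∧ extEdges (unsplit p) = k} := by
    haveI := finite_pred (m + 1)
      (fun t => numEdges t = m + 1 ∧ extEdges t = k) (fun t ht => ht.1)
    exact Finite.of_injective
      (β := {t : OTree // numEdges t = m + 1 ∧ extEdges t = k})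
      (fun p => ⟨unsplit p.1, p.2⟩)
      (fun p q hpq => by
        apply Subtype.ext
        rw [← split_unsplit p.1, ← split_unsplit q.1]
        congr 1
        exact congrArg Subtype.val hpq)
  rw [card_split (fun p : OTree × OTree =>
    numEdges (unsplit p) = m + 1 ∧ extEdges (unsplit p) = k)
    (fun p => numLeaves p.1 ≤ 1)]
  congr 1
  · rw [← card_conv' extEdges extEdges (fun t => numLeaves t ≤ 1) m k]
    refine card_subtype_congr (fun p => ?_)
    rw [numEdges_unsplit, extEdges_unsplit]
    constructor
    · rintro ⟨⟨h1, h2⟩, h3⟩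
      rw [if_neg (by omega)] at h2
      exact ⟨⟨by omega, by omega⟩, h3⟩
    · rintro ⟨⟨h1, h2⟩, h3⟩
      refine ⟨⟨by omega, ?_⟩, h3⟩
      rw [if_neg (by omega)]
      omega
  · rw [← card_conv' (fun t => 1 + extEdges t) extEdges (fun t => 2 ≤ numLeaves t) m k]
    refine card_subtype_congr (fun p => ?_)
    rw [numEdges_unsplit, extEdges_unsplit]
    constructor
    · rintro ⟨⟨h1, h2⟩, h3⟩
      have h3' : 2 ≤ numLeaves p.1 := by omega
      rw [if_pos h3'] at h2
      exact ⟨⟨by omega, by omega⟩, h3'⟩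
    · rintro ⟨⟨h1, h2⟩, h3⟩
      refine ⟨⟨by omega, ?_⟩, by omega⟩
      rw [if_pos h3]
      omega

end OTree
namespace OTree

open PowerSeries in
/-- Two-variable generating series of a double sequence of counts. -/
noncomputable def P2 (f : ℕ → ℕ → ℕ) : PowerSeries (PowerSeries ℤ) :=
  PowerSeries.mk fun n => PowerSeries.mk fun k => (f n k : ℤ)

namespace GF
open PowerSeries

noncomputable abbrev qq : PowerSeries (PowerSeries ℤ) := C (X : PowerSeries ℤ)

theorem P2_eq_one_add (f u v : ℕ → ℕ → ℕ)
    (h0 : ∀ k, f 0 k = if k = 0 then 1 else 0)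
    (hrec : ∀ m k, f (m+1) k = ∑ ab ∈ Finset.HasAntidiagonal.antidiagonal m, ∑ cd ∈ Finset.HasAntidiagonal.antidiagonal k,
      u ab.1 cd.1 * v ab.2 cd.2) :
    P2 f = 1 + X * (P2 u * P2 v) := by
  refine PowerSeries.ext fun n => ?_
  rw [map_add]
  cases n with
  | zero =>
    rw [P2, coeff_mk, coeff_zero_X_mul, coeff_one, if_pos rfl, add_zero]
    refine PowerSeries.ext fun k => ?_
    rw [coeff_mk, coeff_one, h0]
    split <;> norm_num
  | succ m =>
    rw [P2, coeff_mk, coeff_succ_X_mul, coeff_one, if_neg (by omega), zero_add, coeff_mul]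
    refine PowerSeries.ext fun k => ?_
    rw [coeff_mk, map_sum]
    have : ∀ ab : ℕ × ℕ, (coeff (R := ℤ) k) ((coeff (R := PowerSeries ℤ) ab.1) (P2 u) * (coeff (R := PowerSeries ℤ) ab.2) (P2 v))
        = ∑ cd ∈ Finset.HasAntidiagonal.antidiagonal k, ((u ab.1 cd.1 : ℤ) * (v ab.2 cd.2 : ℤ)) := by
      intro ab
      simp only [P2, coeff_mk, coeff_mul]
    rw [Finset.sum_congr rfl (fun ab _ => this ab), hrec]
    push_cast
    rfl

theorem P2_add (f u v : ℕ → ℕ → ℕ) (h : ∀ n k, f n k = u n k + v n k) :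
    P2 f = P2 u + P2 v := by
  refine PowerSeries.ext fun n => ?_
  simp only [map_add, P2, coeff_mk]
  refine PowerSeries.ext fun k => ?_
  simp only [map_add, coeff_mk, h]
  push_cast
  rfl

theorem P2_shift (u u0 : ℕ → ℕ → ℕ) (h : ∀ n k, u n k = if k = 0 then 0 else u0 n (k - 1)) :
    P2 u = qq * P2 u0 := by
  refine PowerSeries.ext fun n => ?_
  simp only [P2, qq, coeff_C_mul, coeff_mk]
  refine PowerSeries.ext fun k => ?_
  cases k with
  | zero => rw [coeff_zero_X_mul, coeff_mk, h]; norm_num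
  | succ j => rw [coeff_succ_X_mul, coeff_mk, coeff_mk, h]; norm_num

theorem P2_const_one (f : ℕ → ℕ → ℕ) (h : ∀ n k, f n k = if k = 0 then 1 else 0) :
    P2 f = PowerSeries.mk fun _ => (1 : PowerSeries ℤ) := by
  refine PowerSeries.ext fun n => ?_
  rw [P2, coeff_mk, coeff_mk]
  refine PowerSeries.ext fun k => ?_
  rw [coeff_mk, h, coeff_one]
  split <;> norm_num

end GF
end OTree
namespace OTree
namespace GF
open PowerSeries

theorem mk_one_eq : (1 : PowerSeries (PowerSeries ℤ)) + X * (PowerSeries.mk fun _ => (1 : PowerSeries ℤ)) = PowerSeries.mk fun _ => (1 : PowerSeries ℤ) := by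
  refine PowerSeries.ext fun n => ?_
  cases n with
  | zero => rw [map_add, coeff_zero_X_mul, coeff_mk, coeff_one, if_pos rfl, add_zero]
  | succ m => rw [map_add, coeff_succ_X_mul, coeff_mk, coeff_mk, coeff_one, if_neg (by omega), zero_add]

theorem counts_eq (n k : ℕ) :
    cnt (sL 0) (fun _ => True) n k = cnt extEdges (fun _ => True) n k := by
  classical
  set A0 : PowerSeries (PowerSeries ℤ) := P2 (cnt (sL 0) (fun _ => True)) with hA0
  set A1 : PowerSeries (PowerSeries ℤ) := P2 (cnt (sL 1) (fun _ => True)) with hA1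
  set A2 : PowerSeries (PowerSeries ℤ) := P2 (cnt (sL 2) (fun _ => True)) with hA2
  set G : PowerSeries (PowerSeries ℤ) := P2 (cnt extEdges (fun _ => True)) with hG
  set D : PowerSeries (PowerSeries ℤ) := P2 (cnt extEdges (fun t => 2 ≤ numLeaves t)) with hD
  set Pp : PowerSeries (PowerSeries ℤ) := P2 (cnt extEdges (fun t => numLeaves t ≤ 1)) with hPp
  have hz : ∀ i : ℕ, sL i (.node []) = 0 := fun i => elmf_nil i 3 0
  have e0 : A0 = 1 + X * (A1 * A0) :=
    P2_eq_one_add _ _ _ (cnt_zero _ _ (hz 0) trivial) lv_rec0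
  have e1 : A1 = 1 + X * (A2 * A1) :=
    P2_eq_one_add _ _ _ (cnt_zero _ _ (hz 1) trivial) lv_rec1
  have e2 : A2 = 1 + X * ((qq * A0) * A2) := by
    have := P2_eq_one_add (cnt (sL 2) (fun _ => True))
      (cnt (fun t => 1 + sL 0 t) (fun _ => True)) (cnt (sL 2) (fun _ => True))
      (cnt_zero _ _ (hz 2) trivial) lv_rec2
    rwa [P2_shift (cnt (fun t => 1 + sL 0 t) (fun _ => True)) (cnt (sL 0) (fun _ => True))
      (cnt_shift _ _), ← hA0, ← hA2] at this
  have ePp : Pp = PowerSeries.mk fun _ => (1 : PowerSeries ℤ) :=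
    P2_const_one _ cnt_path
  have eP : Pp = 1 + X * Pp := by rw [ePp]; exact mk_one_eq.symm
  have eS : G = D + Pp := P2_add _ _ _ ext_split
  have eG : G = 1 + X * ((Pp + qq * D) * G) := by
    have := P2_eq_one_add (cnt extEdges (fun _ => True))
      (fun n k => cnt extEdges (fun t => numLeaves t ≤ 1) n k
        + cnt (fun t => 1 + extEdges t) (fun t => 2 ≤ numLeaves t) n k)
      (cnt extEdges (fun _ => True))
      (cnt_zero _ _ extEdges_nil trivial)
      (fun m k => by
        rw [ext_rec m k]
        rw [← Finset.sum_add_distrib]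
        refine Finset.sum_congr rfl (fun ab _ => ?_)
        rw [← Finset.sum_add_distrib]
        exact Finset.sum_congr rfl (fun cd _ => by ring))
    rwa [P2_add (fun n k => cnt extEdges (fun t => numLeaves t ≤ 1) n k
        + cnt (fun t => 1 + extEdges t) (fun t => 2 ≤ numLeaves t) n k)
        (cnt extEdges (fun t => numLeaves t ≤ 1))
        (cnt (fun t => 1 + extEdges t) (fun t => 2 ≤ numLeaves t)) (fun _ _ => rfl),
      P2_shift (cnt (fun t => 1 + extEdges t) (fun t => 2 ≤ numLeaves t))
        (cnt extEdges (fun t => 2 ≤ numLeaves t)) (cnt_shift _ _), ← hPp, ← hD, ← hG] at this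
  -- quadratic for A0
  have hB : A1 * (1 - X * A2) = 1 := by linear_combination e1
  have hC : A2 * (1 - X * qq * A0) = 1 := by linear_combination e2
  have stepi : A0 * (1 - X * A2) = 1 - X * A2 + X * A0 := by
    linear_combination (1 - X * A2) * e0 + (X * A0) * hB
  have hA : A0 - 2*X*A0 + X*qq*A0 - X*qq*A0^2 + X^2*qq*A0^2 = 1 - X := by
    linear_combination (1 - X * qq * A0) * stepi + (X * A0 - X) * hC
  have hP : Pp * (1 - X) = 1 := by linear_combination eP
  have hGq : G - 2*X*G + X*qq*G - X*qq*G^2 + X^2*qq*G^2 = 1 - X := by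
    linear_combination (1 - X) * eG + (-(X * G * (qq - 1))) * hP + (-(1 - X) * X * qq * G) * eS
  have hfac : (A0 - G) * ((1 - 2*X + X*qq) - X*qq*(1-X)*(A0+G)) = 0 := by
    linear_combination hA - hGq
  have hne : ((1 : PowerSeries (PowerSeries ℤ)) - 2*X + X*qq) - X*qq*(1-X)*(A0+G) ≠ 0 := by
    intro h
    have := congrArg (constantCoeff (R := PowerSeries ℤ)) h
    simp only [map_sub, map_add, map_mul, map_one, map_ofNat, constantCoeff_X, map_zero] at this
    simp at this
  have hAG : A0 = G := by
    rcases mul_eq_zero.mp hfac with h | h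
    · exact sub_eq_zero.mp h
    · exact absurd h hne
  have := congrArg (coeff (R := ℤ) k) (congrArg (coeff (R := PowerSeries ℤ) n) hAG)
  rw [hA0, hG, P2, P2, coeff_mk, coeff_mk, coeff_mk, coeff_mk] at this
  exact_mod_cast this

end GF
end OTree

namespace OTree

theorem card_level_ext (n k : ℕ) :
    Nat.card {t : OTree // t.numEdges = n ∧ t.edgesLevelMod 3 0 = k} =
      Nat.card {t : OTree // t.numEdges = n ∧ t.extEdges = k} := by
  have h := GF.counts_eq n k
  rw [cnt, cnt] at h
  calc Nat.card {t : OTree // t.numEdges = n ∧ t.edgesLevelMod 3 0 = k}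
      = Nat.card {t : OTree // (t.numEdges = n ∧ sL 0 t = k) ∧ True} :=
        card_subtype_congr (fun t => ⟨fun h => ⟨⟨h.1, h.2⟩, trivial⟩, fun h => ⟨h.1.1, h.1.2⟩⟩)
    _ = Nat.card {t : OTree // (t.numEdges = n ∧ t.extEdges = k) ∧ True} := h
    _ = Nat.card {t : OTree // t.numEdges = n ∧ t.extEdges = k} :=
        card_subtype_congr (fun t => ⟨fun h => ⟨h.1.1, h.1.2⟩, fun h => ⟨⟨h.1, h.2⟩, trivial⟩⟩)

/-- Decomposition of trees with `n` edges by the value of a statistic. -/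
def decompStat (n : ℕ) (s : OTree → ℕ) :
    {t : OTree // t.numEdges = n} ≃ Σ k : ℕ, {t : OTree // t.numEdges = n ∧ s t = k} where
  toFun t := ⟨s t.1, ⟨t.1, t.2, rfl⟩⟩
  invFun x := ⟨x.2.1, x.2.2.1⟩
  left_inv t := rfl
  right_inv x := by
    obtain ⟨k, t, h1, h2⟩ := x
    subst h2
    rfl

end OTree



/-- There is a bijection on ordered trees with `n` edges carrying trees with exactly
`k` exterior edges to trees with exactly `k` edges at level `h` with `h ≡ 0 (mod 3)`;
in particular, for each `0 ≤ k ≤ n-2` the number of ordered trees with `n` edges and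
`k` exterior edges equals the number of ordered trees with `n` edges and `k` edges at
level divisible by `3`. -/
theorem otree_exterior_edges_equidistributed (n : ℕ) (hn : 1 ≤ n) :
    (∃ Φ : {t : OTree // t.numEdges = n} ≃ {t : OTree // t.numEdges = n},
      ∀ t : {t : OTree // t.numEdges = n},
        (Φ t : OTree).edgesLevelMod 3 0 = (t : OTree).extEdges) ∧
    ∀ k : ℕ, k ≤ n - 2 →
      Nat.card {t : OTree // t.numEdges = n ∧ t.extEdges = k} =
        Nat.card {t : OTree // t.numEdges = n ∧ t.edgesLevelMod 3 0 = k} := by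
  constructor
  · haveI hFe : ∀ k, Finite {t : OTree // t.numEdges = n ∧ t.extEdges = k} :=
      fun k => OTree.finite_pred n _ (fun t ht => ht.1)
    haveI hFl : ∀ k, Finite {t : OTree // t.numEdges = n ∧ t.edgesLevelMod 3 0 = k} :=
      fun k => OTree.finite_pred n _ (fun t ht => ht.1)
    have he : ∀ k, {t : OTree // t.numEdges = n ∧ t.extEdges = k} ≃
        {t : OTree // t.numEdges = n ∧ t.edgesLevelMod 3 0 = k} := fun k =>
      (Finite.equivFinOfCardEq rfl).trans
        ((finCongr (OTree.card_level_ext n k).symm).trans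
          (Finite.equivFinOfCardEq rfl).symm)
    refine ⟨(OTree.decompStat n OTree.extEdges).trans
      ((Equiv.sigmaCongrRight he).trans (OTree.decompStat n (fun t => t.edgesLevelMod 3 0)).symm),
      fun t => ?_⟩
    exact ((he (OTree.extEdges t.1)) ⟨t.1, t.2, rfl⟩).2.2
  · intro k _
    exact (OTree.card_level_ext n k).symm
end
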